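/- The Dirichlet transformed-path graph Laplacian Δ_{∞,dir} = ∑_{m≥1} φ(m) Δ_{m,dir} on X⁽ⁿ⁾ = {1,...,n} with φ(m) = (−1)^{m+1}·2/m² is a symmetric n×n Toeplitz matrix with entries (Δ_{∞,dir})_{ij} = π²/3 if i = j and (Δ_{∞,dir})_{ij} = (−1)^{|i−j|}·2/|i−j|² if i ≠ j. -/

import Mathlib

open Real

private lemma alt_basel : HasSum (fun n : ℕ => (-1:ℝ)^(n+1) / (n:ℝ)^2) (π^2/12) := by
  have h := hasSum_zeta_two
  have hg : HasSum (fun n : ℕ => if Even n then (1:ℝ)/(n:ℝ)^2 else 0) (π^2/24) := by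
    have hinj : Function.Injective (fun k : ℕ => 2 * k) := fun a b h => by simpa using h
    rw [← Function.Injective.hasSum_iff hinj (by
      intro x hx
      have : ¬ Even x := by
        simp only [Set.mem_range] at hx
        rintro ⟨c, hc⟩; exact hx ⟨c, by omega⟩
      simp [this])]
    have h2 := h.mul_left (1/4)
    have hfe : ((fun n : ℕ => if Even n then (1:ℝ)/(n:ℝ)^2 else 0) ∘ (fun k : ℕ => 2 * k))
        = fun k : ℕ => (1/4) * ((1:ℝ)/(k:ℝ)^2) := by
      funext k
      simp only [Function.comp]
      rw [if_pos ⟨k, by ring⟩]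
      push_cast
      rcases eq_or_ne (k:ℝ) 0 with hk | hk
      · simp [hk]
      · field_simp; ring
    rw [hfe, show (π^2/24 : ℝ) = 1/4 * (π^2/6) by ring]
    exact h2
  have hs := h.sub (hg.mul_left 2)
  have heq : (fun n : ℕ => (1:ℝ)/(n:ℝ)^2 - 2 * (if Even n then (1:ℝ)/(n:ℝ)^2 else 0))
      = fun n : ℕ => (-1:ℝ)^(n+1) / (n:ℝ)^2 := by
    funext k
    rcases Nat.even_or_odd k with hk | hk
    · have h1 : (-1:ℝ)^(k+1) = -1 := Odd.neg_one_pow (Even.add_one hk)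
      rw [if_pos hk, h1]; ring
    · have h1 : (-1:ℝ)^(k+1) = 1 := Even.neg_one_pow (Odd.add_one hk)
      rw [if_neg (Nat.not_even_iff_odd.mpr hk), h1]; ring
  rw [heq] at hs
  rw [show (π^2/12:ℝ) = π^2/6 - 2*(π^2/24) by ring]; exact hs

private lemma diag_two (n m : ℕ) (hm : 1 ≤ m) (i : Fin n) :
    ((Finset.filter (fun k : Fin n => ((i : ℤ) - (k : ℤ)).natAbs = m)
        Finset.univ).card : ℝ) +
      ({z : ℤ | z ∉ Set.Icc (1 : ℤ) n ∧ ((i : ℤ) + 1 - z).natAbs = m}.ncard : ℝ) = 2 := by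
  have hin : i.val < n := i.isLt
  have hab : ((i:ℤ) + 1 - (m:ℤ)) ≠ ((i:ℤ) + 1 + (m:ℤ)) := by omega
  by_cases hA : (m:ℤ) ≤ (i:ℤ)
  · by_cases hB : (i:ℤ) + (m:ℤ) < (n:ℤ)
    · have hF : (Finset.filter (fun k : Fin n => ((i : ℤ) - (k : ℤ)).natAbs = m) Finset.univ)
          = {⟨i.val - m, by omega⟩, ⟨i.val + m, by omega⟩} := by
        ext k
        have := k.isLt
        simp only [Finset.mem_filter, Finset.mem_univ, true_and, Finset.mem_insert,
          Finset.mem_singleton, Fin.ext_iff]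
        omega
      have hS : {z : ℤ | z ∉ Set.Icc (1 : ℤ) n ∧ ((i : ℤ) + 1 - z).natAbs = m} = ∅ := by
        ext z
        simp only [Set.mem_setOf_eq, Set.mem_Icc, Set.mem_empty_iff_false, iff_false, not_and,
          not_not]
        omega
      rw [hF, hS]
      rw [Finset.card_insert_of_notMem (by simp [Fin.ext_iff]; omega), Finset.card_singleton]
      simp
    · have hF : (Finset.filter (fun k : Fin n => ((i : ℤ) - (k : ℤ)).natAbs = m) Finset.univ)
          = {⟨i.val - m, by omega⟩} := by
        ext k
        have := k.isLt
        simp only [Finset.mem_filter, Finset.mem_univ, true_and, Finset.mem_singleton, Fin.ext_iff]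
        omega
      have hS : {z : ℤ | z ∉ Set.Icc (1 : ℤ) n ∧ ((i : ℤ) + 1 - z).natAbs = m}
          = {(i:ℤ) + 1 + (m:ℤ)} := by
        ext z
        simp only [Set.mem_setOf_eq, Set.mem_Icc, Set.mem_singleton_iff, not_and, not_le]
        constructor
        · rintro ⟨h1, h2⟩; omega
        · rintro rfl; constructor <;> omega
      rw [hF, hS, Finset.card_singleton, Set.ncard_singleton]
      norm_num
  · by_cases hB : (i:ℤ) + (m:ℤ) < (n:ℤ)
    · have hF : (Finset.filter (fun k : Fin n => ((i : ℤ) - (k : ℤ)).natAbs = m) Finset.univ)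
          = {⟨i.val + m, by omega⟩} := by
        ext k
        have := k.isLt
        simp only [Finset.mem_filter, Finset.mem_univ, true_and, Finset.mem_singleton, Fin.ext_iff]
        omega
      have hS : {z : ℤ | z ∉ Set.Icc (1 : ℤ) n ∧ ((i : ℤ) + 1 - z).natAbs = m}
          = {(i:ℤ) + 1 - (m:ℤ)} := by
        ext z
        simp only [Set.mem_setOf_eq, Set.mem_Icc, Set.mem_singleton_iff, not_and, not_le]
        constructor
        · rintro ⟨h1, h2⟩; omega
        · rintro rfl; constructor <;> omega
      rw [hF, hS, Finset.card_singleton, Set.ncard_singleton]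
      norm_num
    · have hF : (Finset.filter (fun k : Fin n => ((i : ℤ) - (k : ℤ)).natAbs = m) Finset.univ)
          = ∅ := by
        ext k
        have := k.isLt
        simp only [Finset.mem_filter, Finset.mem_univ, true_and, Finset.notMem_empty, iff_false]
        omega
      have hS : {z : ℤ | z ∉ Set.Icc (1 : ℤ) n ∧ ((i : ℤ) + 1 - z).natAbs = m}
          = {(i:ℤ) + 1 - (m:ℤ), (i:ℤ) + 1 + (m:ℤ)} := by
        ext z
        simp only [Set.mem_setOf_eq, Set.mem_Icc, Set.mem_insert_iff, Set.mem_singleton_iff,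
          not_and, not_le]
        constructor
        · rintro ⟨h1, h2⟩; omega
        · rintro (rfl | rfl) <;> (constructor <;> omega)
      rw [hF, hS, Finset.card_empty, Set.ncard_pair hab]
      norm_num

/-- The Dirichlet transformed-path graph Laplacian `Δ_{∞,dir} = ∑_{m≥1} φ(m) Δ_{m,dir}`
on `X⁽ⁿ⁾ = {1,…,n}` with `φ(m) = (-1)^(m+1)·2/m²` is the symmetric Toeplitz matrix
with diagonal entries `π²/3` and off-diagonal entries `(-1)^|i-j|·2/|i-j|²`.
Here node `i+1 ∈ {1,…,n}` corresponds to the index `i : Fin n`, and `Δ_{m,dir}` has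
entries given by the `m`-path neighbor count inside `{1,…,n}` plus the Dirichlet
boundary potential on the diagonal, and `-1` at pairs at distance `m`. -/
theorem transformed_path_laplacian_toeplitz
    (n : ℕ) (φ : ℕ → ℝ) (hφ : ∀ m : ℕ, 1 ≤ m → φ m = (-1 : ℝ) ^ (m + 1) * 2 / (m : ℝ) ^ 2)
    (Δ : ℕ → Matrix (Fin n) (Fin n) ℝ)
    (hΔ : ∀ m : ℕ, 1 ≤ m → ∀ i j : Fin n,
      Δ m i j =
        if i = j then
          ((Finset.filter (fun k : Fin n => ((i : ℤ) - (k : ℤ)).natAbs = m)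
              Finset.univ).card : ℝ) +
            ({z : ℤ | z ∉ Set.Icc (1 : ℤ) n ∧ ((i : ℤ) + 1 - z).natAbs = m}.ncard : ℝ)
        else if ((i : ℤ) - (j : ℤ)).natAbs = m then -1 else 0)
    (T : Matrix (Fin n) (Fin n) ℝ)
    (hT : ∀ i j : Fin n,
      T i j = if i = j then Real.pi ^ 2 / 3
        else (-1 : ℝ) ^ (((i : ℤ) - (j : ℤ)).natAbs) * 2 /
          ((((i : ℤ) - (j : ℤ)).natAbs : ℝ)) ^ 2) :
    HasSum (fun m : ℕ+ => φ m • Δ m) T ∧ T.IsSymm := by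
  have hΔtwo : ∀ m : ℕ+, ∀ i : Fin n, Δ m i i = 2 := by
    intro m i
    rw [hΔ m m.2 i i, if_pos rfl]
    exact diag_two n m m.2 i
  have hΔoff : ∀ m : ℕ+, ∀ i j : Fin n, i ≠ j →
      Δ m i j = if ((i : ℤ) - (j : ℤ)).natAbs = (m:ℕ) then -1 else 0 := by
    intro m i j hij
    rw [hΔ m m.2 i j, if_neg hij]
  constructor
  · refine Pi.hasSum.2 fun i => Pi.hasSum.2 fun j => ?_
    simp only [Matrix.smul_apply, smul_eq_mul]
    by_cases hij : i = j
    · subst hij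
      rw [hT, if_pos rfl]
      have key : (fun m : ℕ+ => φ m * Δ m i i)
          = fun m : ℕ+ => 4 * ((-1:ℝ)^((m:ℕ)+1) / ((m:ℕ):ℝ)^2) := by
        funext m
        rw [hΔtwo m i, hφ m m.2]
        ring
      rw [key]
      have halt := alt_basel
      have h1 : HasSum (fun k : ℕ => (-1:ℝ)^((k+1)+1) / ((k+1:ℕ):ℝ)^2) (π^2/12) := by
        refine (hasSum_nat_add_iff (f := fun n : ℕ => (-1:ℝ)^(n+1) / (n:ℝ)^2) 1).2 ?_
        simpa using halt
      have h2 := h1.mul_left 4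
      have h3 : HasSum ((fun m : ℕ+ => 4 * ((-1:ℝ)^((m:ℕ)+1) / ((m:ℕ):ℝ)^2)) ∘
          Equiv.pnatEquivNat.symm) (4 * (π^2/12)) := by
        have hfe : ((fun m : ℕ+ => 4 * ((-1:ℝ)^((m:ℕ)+1) / ((m:ℕ):ℝ)^2)) ∘
            Equiv.pnatEquivNat.symm)
            = fun k : ℕ => 4 * ((-1:ℝ)^((k+1)+1) / ((k+1:ℕ):ℝ)^2) := by
          funext k
          simp [Equiv.pnatEquivNat, Function.comp, Nat.succPNat]
        rw [hfe]
        exact h2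
      rw [show (π^2/3 : ℝ) = 4 * (π^2/12) by ring]
      exact (Equiv.hasSum_iff Equiv.pnatEquivNat.symm).1 h3
    · rw [hT, if_neg hij]
      set d : ℕ := ((i : ℤ) - (j : ℤ)).natAbs with hd
      have hd1 : 1 ≤ d := by
        have : (i:ℤ) ≠ (j:ℤ) := by
          simp only [ne_eq, Nat.cast_inj]
          exact fun h => hij (Fin.ext (by exact_mod_cast h))
        omega
      classical
      have key : (fun m : ℕ+ => φ m * Δ m i j)
          = fun m : ℕ+ => if m = (⟨d, hd1⟩ : ℕ+) then ((-1:ℝ)^d * 2 / (d:ℝ)^2) else 0 := by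
        funext m
        rw [hΔoff m i j hij, hφ m m.2]
        by_cases hm : m = (⟨d, hd1⟩ : ℕ+)
        · have hm2 : (m:ℕ) = d := by rw [hm]; rfl
          rw [if_pos (by rw [hm2]), if_pos hm, hm2, pow_succ]
          ring
        · rw [if_neg hm, if_neg (by
            intro h
            exact hm (PNat.coe_injective (by simpa using h.symm))), mul_zero]
      rw [key]
      exact hasSum_ite_eq _ _
  · show Matrix.transpose T = T
    ext i j
    rw [Matrix.transpose_apply, hT, hT]
    by_cases hij : i = j
    · subst hij; simp
    · rw [if_neg (fun h => hij h.symm), if_neg hij]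
      have : ((j:ℤ) - (i:ℤ)).natAbs = ((i:ℤ) - (j:ℤ)).natAbs := by omega
      rw [this]
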